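/- For every integer n ≥ 2, π^{−n/2} · Γ(n/2) · ∫_{(0,∞)^{n−1}} (1 + Σ_{k=1}^{n−1} t_k²)^{−n/2} dt_1 ⋯ dt_{n−1} = 2^{1−n}. (This quantity is the expected number E(n,2) of internal equilibria of a two-player n-strategy random evolutionary game with independent standard Gaussian payoff differences.) -/

import Mathlib

open Finset MeasureTheory
open Real Set

-- scaled Gamma integral
lemma aux_gamma {b q : ℝ} (hb : 0 < b) (hq : 0 < q) :
    ∫ x in Ioi (0:ℝ), x ^ (q - 1) * Real.exp (-b * x) = b ^ (-q) * Real.Gamma q := by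
  have := integral_rpow_mul_exp_neg_mul_rpow (p := 1) (q := q - 1) (b := b)
    zero_lt_one (by linarith) hb
  simpa [Real.rpow_one] using this

lemma aux_gamma_int {b q : ℝ} (hb : 0 < b) (hq : 0 < q) :
    IntegrableOn (fun x : ℝ => x ^ (q - 1) * Real.exp (-b * x)) (Ioi 0) := by
  have := integrableOn_rpow_mul_exp_neg_mul_rpow (p := 1) (s := q - 1) (b := b)
    (by linarith) zero_lt_one hb
  simpa [Real.rpow_one] using this

lemma aux_indicator_pi (m : ℕ) (g : ℝ → ℝ) :
    (Set.univ.pi (fun _ : Fin m => Ioi (0:ℝ))).indicator (fun t => ∏ k, g (t k)) =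
      fun t => ∏ k, (Ioi (0:ℝ)).indicator g (t k) := by
  funext t
  by_cases h : t ∈ Set.univ.pi (fun _ : Fin m => Ioi (0:ℝ))
  · rw [Set.indicator_of_mem h]
    exact Finset.prod_congr rfl fun k _ =>
      (Set.indicator_of_mem (h k (Set.mem_univ k)) g).symm
  · rw [Set.indicator_of_notMem h]
    simp only [Set.mem_pi, Set.mem_univ, forall_true_left, not_forall] at h
    obtain ⟨k, hk⟩ := h
    exact (Finset.prod_eq_zero (Finset.mem_univ k)
      (Set.indicator_of_notMem hk g)).symm

lemma aux_orth_prod (m : ℕ) (g : ℝ → ℝ) :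
    ∫ t : Fin m → ℝ in Set.univ.pi (fun _ => Ioi (0:ℝ)), ∏ k, g (t k) =
      (∫ x in Ioi (0:ℝ), g x) ^ m := by
  rw [← integral_indicator (MeasurableSet.univ_pi (fun _ => measurableSet_Ioi)),
    aux_indicator_pi]
  rw [show ∫ x in Ioi (0:ℝ), g x = ∫ x, (Ioi (0:ℝ)).indicator g x from
    (integral_indicator measurableSet_Ioi).symm]
  simpa [volume_pi] using MeasureTheory.integral_fintype_prod_eq_pow (ι := Fin m) (μ := volume) ((Ioi (0:ℝ)).indicator g)

lemma aux_orth_prod_int (m : ℕ) (g : ℝ → ℝ) (hg : IntegrableOn g (Ioi (0:ℝ))) :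
    IntegrableOn (fun t : Fin m → ℝ => ∏ k, g (t k))
      (Set.univ.pi (fun _ => Ioi (0:ℝ))) := by
  have := integrable_indicator_iff (μ := volume)
    (MeasurableSet.univ_pi (fun _ => measurableSet_Ioi) :
      MeasurableSet (Set.univ.pi (fun _ : Fin m => Ioi (0:ℝ))))
    (f := fun t : Fin m → ℝ => ∏ k, g (t k))
  rw [aux_indicator_pi] at this
  refine this.1 ?_
  exact Integrable.fintype_prod (f := fun _ : Fin m => (Ioi (0:ℝ)).indicator g)
    (fun _ => (integrable_indicator_iff measurableSet_Ioi).2 hg)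

lemma aux_orth_gauss (m : ℕ) {x : ℝ} (hx : 0 < x) :
    ∫⁻ t : Fin m → ℝ in Set.univ.pi (fun _ => Ioi (0:ℝ)),
      ENNReal.ofReal (Real.exp (-x * ∑ k, (t k) ^ 2)) =
      ENNReal.ofReal ((√(π / x) / 2) ^ m) := by
  have hprod : ∀ t : Fin m → ℝ,
      Real.exp (-x * ∑ k, (t k) ^ 2) = ∏ k, Real.exp (-x * (t k) ^ 2) := by
    intro t
    rw [← Real.exp_sum, Finset.mul_sum]
  have hint : IntegrableOn (fun y : ℝ => Real.exp (-x * y ^ 2)) (Ioi 0) :=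
    (integrable_exp_neg_mul_sq hx).integrableOn
  simp_rw [hprod]
  rw [← ofReal_integral_eq_lintegral_ofReal (aux_orth_prod_int m _ hint)
    (ae_of_all _ fun t => Finset.prod_nonneg fun k _ => (Real.exp_pos _).le),
    aux_orth_prod m (fun y => Real.exp (-x * y ^ 2)), integral_gaussian_Ioi]

lemma meas_rpow_const (c : ℝ) : Measurable fun x : ℝ => x ^ c := by measurability

set_option maxHeartbeats 1000000 in
lemma aux_main (m : ℕ) {s : ℝ} (hs : (m : ℝ) / 2 < s) :
    ∫ t : Fin m → ℝ in Set.univ.pi (fun _ => Ioi (0:ℝ)),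
      (1 + ∑ k, (t k) ^ 2) ^ (-s) =
      (√π / 2) ^ m * Real.Gamma (s - m / 2) / Real.Gamma s := by
  have hs0 : 0 < s := lt_of_le_of_lt (by positivity) hs
  have hs2 : 0 < s - m / 2 := by linarith
  have hQ : ∀ t : Fin m → ℝ, 0 < 1 + ∑ k, (t k) ^ 2 := fun t => by positivity
  set O := Set.univ.pi (fun _ : Fin m => Ioi (0:ℝ)) with hO
  have hOm : MeasurableSet O := MeasurableSet.univ_pi fun _ => measurableSet_Ioi
  have hΓ : 0 < Real.Gamma s := Real.Gamma_pos_of_pos hs0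
  have hQm : Measurable fun t : Fin m → ℝ => ∑ k, (t k) ^ 2 :=
    Finset.measurable_sum _ fun k _ => (measurable_pi_apply k).pow measurable_const
  have key : (∫⁻ t in O, ENNReal.ofReal ((1 + ∑ k, (t k) ^ 2) ^ (-s))) *
      ENNReal.ofReal (Real.Gamma s) =
      ENNReal.ofReal ((√π / 2) ^ m * Real.Gamma (s - m / 2)) := by
    rw [← lintegral_mul_const' _ _ ENNReal.ofReal_ne_top]
    have hpt : ∀ t : Fin m → ℝ,
        ENNReal.ofReal ((1 + ∑ k, (t k) ^ 2) ^ (-s)) * ENNReal.ofReal (Real.Gamma s) =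
        ∫⁻ x in Ioi (0:ℝ),
          ENNReal.ofReal (x ^ (s - 1) * Real.exp (-(1 + ∑ k, (t k) ^ 2) * x)) := by
      intro t
      rw [← ENNReal.ofReal_mul (Real.rpow_nonneg (hQ t).le _), ← aux_gamma (hQ t) hs0]
      exact ofReal_integral_eq_lintegral_ofReal (aux_gamma_int (hQ t) hs0)
        ((ae_restrict_iff' measurableSet_Ioi).2 (ae_of_all _ fun x hx =>
          mul_nonneg (Real.rpow_nonneg (le_of_lt hx) _) (Real.exp_pos _).le))
    simp_rw [hpt]
    rw [lintegral_lintegral_swap]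
    · have hinner : ∀ x ∈ Ioi (0:ℝ),
          (∫⁻ t in O, ENNReal.ofReal
            (x ^ (s - 1) * Real.exp (-(1 + ∑ k, (t k) ^ 2) * x))) =
          ENNReal.ofReal (x ^ (s - 1) * Real.exp (-x)) *
            ENNReal.ofReal ((√(π / x) / 2) ^ m) := by
        intro x hx
        have hsplit : ∀ t : Fin m → ℝ,
            x ^ (s - 1) * Real.exp (-(1 + ∑ k, (t k) ^ 2) * x) =
            x ^ (s - 1) * Real.exp (-x) * Real.exp (-x * ∑ k, (t k) ^ 2) := by
          intro t
          rw [mul_assoc, ← Real.exp_add]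
          ring_nf
        simp_rw [hsplit]
        simp_rw [ENNReal.ofReal_mul (mul_nonneg (Real.rpow_nonneg (le_of_lt hx) _)
          (Real.exp_pos _).le)]
        rw [lintegral_const_mul' _ _ ENNReal.ofReal_ne_top, aux_orth_gauss m hx]
      rw [setLIntegral_congr_fun measurableSet_Ioi hinner]
      have hcong : ∀ x ∈ Ioi (0:ℝ),
          ENNReal.ofReal (x ^ (s - 1) * Real.exp (-x)) *
            ENNReal.ofReal ((√(π / x) / 2) ^ m) =
          ENNReal.ofReal ((√π / 2) ^ m) *
            ENNReal.ofReal (x ^ (s - (m : ℝ) / 2 - 1) * Real.exp (-(1:ℝ) * x)) := by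
        intro x hx
        have hx0 : (0:ℝ) < x := hx
        rw [← ENNReal.ofReal_mul (mul_nonneg (Real.rpow_nonneg hx0.le _)
          (Real.exp_pos _).le), ← ENNReal.ofReal_mul (by positivity)]
        congr 1
        have h1 : √(π / x) = √π * x ^ (-((1:ℝ) / 2)) := by
          rw [Real.sqrt_div pi_pos.le, Real.sqrt_eq_rpow x, div_eq_mul_inv,
            ← Real.rpow_neg hx0.le]
        have h2 : (x ^ (-((1:ℝ) / 2))) ^ m = x ^ (-((m:ℝ) / 2)) := by
          rw [← Real.rpow_natCast (x ^ (-((1:ℝ) / 2))) m, ← Real.rpow_mul hx0.le,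
            show (-((1:ℝ) / 2)) * (m:ℝ) = -((m:ℝ) / 2) by ring]
        have h3 : (√(π / x) / 2) ^ m = (√π / 2) ^ m * x ^ (-((m:ℝ) / 2)) := by
          rw [h1, ← h2]
          ring
        have h4 : x ^ (s - (m : ℝ) / 2 - 1) = x ^ (s - 1) * x ^ (-((m:ℝ) / 2)) := by
          rw [← Real.rpow_add hx0]
          ring_nf
        rw [h3, h4, neg_one_mul]
        ring
      rw [setLIntegral_congr_fun measurableSet_Ioi hcong,
        lintegral_const_mul' _ _ ENNReal.ofReal_ne_top,
        ← ofReal_integral_eq_lintegral_ofReal (aux_gamma_int one_pos hs2)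
          ((ae_restrict_iff' measurableSet_Ioi).2 (ae_of_all _ fun x hx =>
            mul_nonneg (Real.rpow_nonneg (le_of_lt hx) _) (Real.exp_pos _).le)),
        aux_gamma one_pos hs2, Real.one_rpow, one_mul,
        ← ENNReal.ofReal_mul (by positivity)]
    · exact (ENNReal.measurable_ofReal.comp
        (((meas_rpow_const (s-1)).comp measurable_snd).mul (Real.measurable_exp.comp
          (((measurable_const.add (hQm.comp measurable_fst)).neg).mul
            measurable_snd)))).aemeasurable
  have hnn : (0:ℝ) ≤ (√π / 2) ^ m * Real.Gamma (s - m / 2) :=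
    mul_nonneg (by positivity) (Real.Gamma_pos_of_pos hs2).le
  have hL : (∫⁻ t in O, ENNReal.ofReal ((1 + ∑ k, (t k) ^ 2) ^ (-s))) =
      ENNReal.ofReal ((√π / 2) ^ m * Real.Gamma (s - m / 2)) /
        ENNReal.ofReal (Real.Gamma s) := by
    rw [ENNReal.eq_div_iff (ne_of_gt (ENNReal.ofReal_pos.2 hΓ)) ENNReal.ofReal_ne_top,
      mul_comm]
    exact key
  rw [integral_eq_lintegral_of_nonneg_ae
    (ae_of_all _ fun t => Real.rpow_nonneg (hQ t).le _)
    (((meas_rpow_const (-s)).comp (measurable_const.add hQm)).aestronglyMeasurable), hL,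
    ENNReal.toReal_div, ENNReal.toReal_ofReal hnn, ENNReal.toReal_ofReal hΓ.le]

theorem stmt_14 (n : ℕ) (hn : 2 ≤ n) :
    Real.pi ^ (-(n : ℝ) / 2) * Real.Gamma ((n : ℝ) / 2) *
      (∫ t : Fin (n - 1) → ℝ in Set.univ.pi (fun _ => Set.Ioi (0 : ℝ)),
        (1 + ∑ k, (t k) ^ 2) ^ (-(n : ℝ) / 2)) = (2 : ℝ) ^ (1 - (n : ℤ)) := by
  have hn1 : (1:ℕ) ≤ n := by omega
  have hcast : ((n - 1 : ℕ) : ℝ) = (n : ℝ) - 1 := by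
    rw [Nat.cast_sub hn1]; norm_num
  have hs' : ((n - 1 : ℕ) : ℝ) / 2 < (n : ℝ) / 2 := by
    rw [hcast]; linarith
  have hΓpos : 0 < Real.Gamma ((n : ℝ) / 2) := by
    apply Real.Gamma_pos_of_pos; positivity
  simp_rw [neg_div]
  rw [aux_main (n - 1) hs']
  have h12 : (n : ℝ) / 2 - ((n - 1 : ℕ) : ℝ) / 2 = 1 / 2 := by
    rw [hcast]; ring
  rw [h12, Real.Gamma_one_half_eq]
  have hpow : (√π / 2) ^ (n - 1) * √π = π ^ ((n : ℝ) / 2) / 2 ^ (n - 1) := by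
    rw [div_pow, div_mul_eq_mul_div, ← pow_succ, Nat.sub_add_cancel hn1,
      ← Real.rpow_natCast (√π) n, Real.sqrt_eq_rpow, ← Real.rpow_mul Real.pi_pos.le,
      show (1 / 2 : ℝ) * (n : ℝ) = (n : ℝ) / 2 by ring]
  rw [mul_div_assoc ((√π / 2) ^ (n - 1)) (√π), ← mul_div_assoc ((√π / 2) ^ (n - 1)), hpow]
  have hz : (2 : ℝ) ^ (1 - (n : ℤ)) = ((2 : ℝ) ^ (n - 1 : ℕ))⁻¹ := by
    rw [show (1 - (n : ℤ)) = -((n - 1 : ℕ) : ℤ) by omega, zpow_neg, zpow_natCast]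
  rw [hz]
  have hππ : π ^ (-((n : ℝ) / 2)) * π ^ ((n : ℝ) / 2) = 1 := by
    rw [← Real.rpow_add Real.pi_pos]; simp
  have h2 : ((2:ℝ) ^ (n - 1 : ℕ)) ≠ 0 := by positivity
  field_simp
  exact hππ
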